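/- For every n ≥ 1, the barycentric subdivision S(P) of the Z₂-crown P of order n, equipped with the involution C ↦ ν(C), is a Z₂-poset order-isomorphic to the Z₂-crown of order 2n via an isomorphism commuting with the involutions. -/

import Mathlib

/-! ### The poset `Q₁` (face poset of the 1-dimensional cross-polytope) -/

/-- The four elements `+0, -0, +1, -1` of `Q₁`. -/
inductive Q1 : Type
  | p0 | m0 | p1 | m1
deriving DecidableEq

instance instFintypeQ1 : Fintype Q1 :=
  ⟨{.p0, .m0, .p1, .m1}, fun x => by cases x <;> simp⟩

/-- The level (`false` for `±0`, `true` for `±1`) of an element of `Q₁`. -/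
def Q1.lvl : Q1 → Bool
  | .p0 => false | .m0 => false | .p1 => true | .m1 => true

/-- The order on `Q₁`: `±0 < ±1` (all four strict relations). -/
instance : PartialOrder Q1 where
  le x y := x = y ∨ (x.lvl = false ∧ y.lvl = true)
  le_refl x := Or.inl rfl
  le_trans x y z hxy hyz := by
    rcases hxy with rfl | ⟨h1, h2⟩
    · exact hyz
    rcases hyz with rfl | ⟨h3, h4⟩
    · exact Or.inr ⟨h1, h2⟩
    · rw [h2] at h3; exact absurd h3 (by simp)
  le_antisymm x y hxy hyx := by
    rcases hxy with rfl | ⟨h1, h2⟩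
    · rfl
    rcases hyx with rfl | ⟨h3, h4⟩
    · rfl
    · rw [h2] at h3; exact absurd h3 (by simp)

/-- The involution of `Q₁`, swapping `+x` and `-x`. -/
def q1inv : Q1 → Q1
  | .p0 => .m0 | .m0 => .p0 | .p1 => .m1 | .m1 => .p1

/-! ### The `Z₂`-crown of order `n` -/

/-- The `Z₂`-crown of order `n` has element set `ZMod (4n)`. -/
abbrev Crown (n : ℕ) : Type := ZMod (4 * n)

instance (n : ℕ) [NeZero n] : NeZero (4 * n) := ⟨by have := NeZero.ne n; omega⟩

private lemma crown_parity {n : ℕ} [NeZero n] (x : ZMod (4 * n)) :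
    (x + 1).val % 2 = (x.val + 1) % 2 := by
  haveI : Fact (1 < 4 * n) := ⟨by have := NeZero.ne n; omega⟩
  rw [ZMod.val_add, ZMod.val_one, Nat.mod_mod_of_dvd _ ⟨2 * n, by ring⟩]

/-- The order on the crown, generated by `e < e + 1` and `e < e - 1` for even `e`. -/
instance crownPO (n : ℕ) [NeZero n] : PartialOrder (Crown n) where
  le x y := x = y ∨ (Even x.val ∧ (y = x + 1 ∨ y = x - 1))
  le_refl x := Or.inl rfl
  le_trans x y z hxy hyz := by
    rcases hxy with rfl | ⟨hex, hy⟩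
    · exact hyz
    rcases hyz with rfl | ⟨hey, hz⟩
    · exact Or.inr ⟨hex, hy⟩
    · exfalso
      rcases hy with rfl | rfl
      · have h := crown_parity x
        rw [Nat.even_iff] at hex hey; omega
      · have e : x - 1 + 1 = x := by ring
        have h := crown_parity (x - 1)
        rw [e] at h
        rw [Nat.even_iff] at hex hey; omega
  le_antisymm x y hxy hyx := by
    rcases hxy with rfl | ⟨hex, hy⟩
    · rfl
    rcases hyx with rfl | ⟨hey, hx⟩
    · rfl
    · exfalso
      rcases hy with rfl | rfl
      · have h := crown_parity x
        rw [Nat.even_iff] at hex hey; omega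
      · have e : x - 1 + 1 = x := by ring
        have h := crown_parity (x - 1)
        rw [e] at h
        rw [Nat.even_iff] at hex hey; omega

/-! ### The vector space `ZMod2^{P²}` with its strict order indicator -/

/-- Ordered pairs `(x,y)` with `x ≤ y` of a poset: the basis of `ZMod2^{P²}`. -/
abbrev OPairs (P : Type) [PartialOrder P] : Type := {p : P × P // p.1 ≤ p.2}

/-- The `ZMod 2`-vector space with basis the ordered pairs of `P`. -/
abbrev VS (P : Type) [PartialOrder P] := OPairs P →₀ ZMod 2

open scoped Classical in
/-- The strict order indicator: the sum of the basis elements `(x,y)` with `x < y`. -/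
noncomputable def soi (P : Type) [PartialOrder P] [Finite P] : VS P :=
  letI : Fintype (OPairs P) := Fintype.ofFinite _
  ∑ p : OPairs P, if p.val.1 < p.val.2 then Finsupp.single p 1 else 0

open scoped Classical in
/-- The sum of the basis elements `(x,y)` with `x < y` and `x, y ∈ S`. -/
noncomputable def soiOn {P : Type} [PartialOrder P] [Finite P] (S : Set P) : VS P :=
  letI : Fintype (OPairs P) := Fintype.ofFinite _
  ∑ p : OPairs P,
    if p.val.1 ∈ S ∧ p.val.2 ∈ S ∧ p.val.1 < p.val.2 then Finsupp.single p 1 else 0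

/-- The linear map `f̂` induced by a monotone map, sending the basis element `(x,y)`
to `(f x, f y)`. -/
noncomputable def fhat {P Q : Type} [PartialOrder P] [PartialOrder Q] {f : P → Q}
    (hf : Monotone f) : VS P →ₗ[ZMod 2] VS Q :=
  Finsupp.lmapDomain (ZMod 2) (ZMod 2) (fun p => ⟨(f p.val.1, f p.val.2), hf p.prop⟩)

/-- The barycentric subdivision of a poset: nonempty chains, ordered by inclusion. -/
def Sd (α : Type) [PartialOrder α] : Type :=
  {C : Set α // C.Nonempty ∧ IsChain (· ≤ ·) C}

instance {α : Type} [PartialOrder α] : PartialOrder (Sd α) :=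
  inferInstanceAs (PartialOrder {C : Set α // C.Nonempty ∧ IsChain (· ≤ ·) C})

instance {α : Type} [PartialOrder α] [Finite α] : Finite (Sd α) :=
  inferInstanceAs (Finite {C : Set α // C.Nonempty ∧ IsChain (· ≤ ·) C})

instance (n : ℕ) [NeZero n] : NeZero (2 * n) := ⟨by have := NeZero.ne n; omega⟩


/-! ### Auxiliary development -/

section AuxCrown

variable {n : ℕ} [NeZero n]

lemma crown_le_iff (x y : Crown n) :
    x ≤ y ↔ x = y ∨ (Even x.val ∧ (y = x + 1 ∨ y = x - 1)) := Iff.rfl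

lemma crown_eq_iff (x y : Crown n) : x = y ↔ x.val = y.val :=
  ⟨fun h => h ▸ rfl, fun h => ZMod.val_injective _ h⟩

lemma crown_succ_odd (x : Crown n) (h : Even x.val) : ¬ Even (x + 1).val := by
  have := crown_parity x; rw [Nat.even_iff] at *; omega

lemma crown_pred_odd (x : Crown n) (h : Even x.val) : ¬ Even (x - 1).val := by
  have h2 := crown_parity (x - 1)
  rw [show x - 1 + 1 = x by ring] at h2
  rw [Nat.even_iff] at *; omega

lemma pair_chain (a : Crown n) : IsChain (· ≤ ·) ({a, a + 1} : Set (Crown n)) := by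
  have h : a ≤ a + 1 ∨ a + 1 ≤ a := by
    by_cases he : Even a.val
    · exact Or.inl ((crown_le_iff _ _).2 (Or.inr ⟨he, Or.inl rfl⟩))
    · refine Or.inr ((crown_le_iff _ _).2 (Or.inr ⟨?_, Or.inr (by ring)⟩))
      have := crown_parity a; rw [Nat.even_iff] at *; omega
  intro x hx y hy hne
  rcases hx with rfl | hx
  · rcases hy with rfl | hy
    · exact absurd rfl hne
    · rw [Set.mem_singleton_iff] at hy; subst hy; exact h
  · rw [Set.mem_singleton_iff] at hx; subst hx
    rcases hy with rfl | hy
    · exact h.symm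
    · rw [Set.mem_singleton_iff] at hy; subst hy; exact absurd rfl hne

lemma sd_le_iff (C D : Sd (Crown n)) : C ≤ D ↔ C.val ⊆ D.val := Iff.rfl

/-- Classification of chains in the crown. -/
lemma sd_classify (C : Sd (Crown n)) :
    (∃ x, C.val = {x}) ∨ (∃ a : Crown n, C.val = {a, a + 1}) := by
  obtain ⟨⟨x, hx⟩, hch⟩ := C.prop
  by_cases h : ∀ y ∈ C.val, y = x
  · exact Or.inl ⟨x, Set.eq_singleton_iff_unique_mem.2 ⟨hx, h⟩⟩
  push_neg at h
  obtain ⟨y, hy, hyx⟩ := h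
  have key : ∀ u v : Crown n, u ∈ C.val → v ∈ C.val → u ≤ v → u ≠ v →
      Even u.val ∧ (v = u + 1 ∨ v = u - 1) ∧ C.val = {u, v} := by
    intro u v hu hv huv hne
    rcases (crown_le_iff u v).1 huv with h1 | ⟨heu, hv1⟩
    · exact absurd h1 hne
    have hov : ¬ Even v.val := by
      rcases hv1 with rfl | rfl
      · exact crown_succ_odd u heu
      · exact crown_pred_odd u heu
    refine ⟨heu, hv1, ?_⟩
    ext z
    constructor
    · intro hz
      by_contra hzn
      simp only [Set.mem_insert_iff, Set.mem_singleton_iff, not_or] at hzn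
      obtain ⟨hzu, hzv⟩ := hzn
      have hcu := hch hz hu hzu
      have hcv := hch hz hv hzv
      have hoz : ¬ Even z.val := by
        rcases hcu with hc | hc
        · rcases (crown_le_iff z u).1 hc with h1 | ⟨hez, hu1⟩
          · exact absurd h1 hzu
          · exfalso
            rcases hu1 with rfl | rfl
            · exact crown_succ_odd z hez heu
            · exact crown_pred_odd z hez heu
        · rcases (crown_le_iff u z).1 hc with h1 | ⟨_, hz1⟩
          · exact absurd h1.symm hzu
          · rcases hz1 with rfl | rfl
            · exact crown_succ_odd u heu
            · exact crown_pred_odd u heu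
      rcases hcv with hc | hc
      · rcases (crown_le_iff z v).1 hc with h1 | ⟨hez, _⟩
        · exact hzv h1
        · exact hoz hez
      · rcases (crown_le_iff v z).1 hc with h1 | ⟨hez, _⟩
        · exact hzv h1.symm
        · exact hov hez
    · intro hz
      rcases hz with rfl | hz
      · exact hu
      · rw [Set.mem_singleton_iff] at hz; subst hz; exact hv
  rcases hch hx hy (fun h => hyx h.symm) with hc | hc
  · obtain ⟨_, hv1, hCeq⟩ := key x y hx hy hc (fun h => hyx h.symm)
    rcases hv1 with rfl | rfl
    · exact Or.inr ⟨x, hCeq⟩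
    · refine Or.inr ⟨x - 1, ?_⟩
      rw [hCeq, Set.pair_comm, show x - 1 + 1 = x by ring]
  · obtain ⟨_, hv1, hCeq⟩ := key y x hy hx hc hyx
    rcases hv1 with rfl | rfl
    · exact Or.inr ⟨y, hCeq⟩
    · refine Or.inr ⟨y - 1, ?_⟩
      rw [hCeq, Set.pair_comm, show y - 1 + 1 = y by ring]

/-- Translation by `2n`. -/
def crownTr (x : Crown n) : Crown n := x + ((2 * n : ℕ) : Crown n)

lemma crownTr_val_parity (x : Crown n) : (crownTr x).val % 2 = x.val % 2 := by
  have hx := ZMod.val_lt x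
  have hne := NeZero.ne n
  rw [crownTr, ZMod.val_add, ZMod.val_natCast,
    Nat.mod_eq_of_lt (show 2 * n < 4 * n by omega),
    Nat.mod_mod_of_dvd _ ⟨2 * n, by ring⟩]
  omega

lemma crownTr_monotone : Monotone (crownTr (n := n)) := by
  intro x y hxy
  rcases (crown_le_iff x y).1 hxy with rfl | ⟨hex, hy⟩
  · exact le_refl _
  refine (crown_le_iff _ _).2 (Or.inr ⟨?_, ?_⟩)
  · have := crownTr_val_parity x; rw [Nat.even_iff] at *; omega
  · rcases hy with rfl | rfl
    · exact Or.inl (by rw [crownTr, crownTr]; ring)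
    · exact Or.inr (by rw [crownTr, crownTr]; ring)

lemma crown_tr_tr (x : Crown n) : crownTr (crownTr x) = x := by
  rw [crownTr, crownTr, add_assoc, ← Nat.cast_add,
    show 2 * n + 2 * n = 4 * n by ring, ZMod.natCast_self, add_zero]

/-- The involution on the barycentric subdivision of the crown. -/
def iotamap (C : Sd (Crown n)) : Sd (Crown n) :=
  ⟨(fun x : Crown n => x + ((2 * n : ℕ) : Crown n)) '' C.val,
   C.prop.1.image _, C.prop.2.image_of_map_rel _ _ _ (fun _ _ h => crownTr_monotone h)⟩

/-- Half of an element of the bigger crown. -/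
def ghalf (E : Crown (2 * n)) : Crown n := ((E.val / 2 : ℕ) : Crown n)

lemma ghalf_val (E : Crown (2 * n)) : (ghalf E).val = E.val / 2 := by
  have : E.val < 4 * (2 * n) := ZMod.val_lt E
  rw [ghalf, ZMod.val_natCast]
  exact Nat.mod_eq_of_lt (by omega)

def gset (E : Crown (2 * n)) : Set (Crown n) :=
  if Even E.val then {ghalf E} else {ghalf E, ghalf E + 1}

lemma gset_nonempty (E : Crown (2 * n)) : (gset E).Nonempty := by
  rw [gset]; split
  · exact ⟨_, rfl⟩
  · exact ⟨_, Set.mem_insert _ _⟩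

lemma gset_chain (E : Crown (2 * n)) : IsChain (· ≤ ·) (gset E) := by
  rw [gset]; split
  · exact Set.pairwise_singleton _ _
  · exact pair_chain _

/-- The order isomorphism from the big crown to the subdivision, as a map. -/
def gmap (E : Crown (2 * n)) : Sd (Crown n) :=
  ⟨gset E, gset_nonempty E, gset_chain E⟩

lemma gmap_val_even {E : Crown (2 * n)} (h : Even E.val) :
    (gmap E).val = {ghalf E} := by
  show gset E = _; rw [gset, if_pos h]

lemma gmap_val_odd {E : Crown (2 * n)} (h : ¬ Even E.val) :
    (gmap E).val = {ghalf E, ghalf E + 1} := by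
  show gset E = _; rw [gset, if_neg h]

lemma crown_add_one_val (x : Crown n) : (x + 1).val = (x.val + 1) % (4 * n) := by
  haveI : Fact (1 < 4 * n) := ⟨by have := NeZero.ne n; omega⟩
  rw [ZMod.val_add, ZMod.val_one]

lemma mod_succ_cases {m e : ℕ} (h : e < m) :
    ((e + 1) % m = e + 1 ∧ e + 1 < m) ∨ ((e + 1) % m = 0 ∧ e + 1 = m) := by
  rcases Nat.lt_or_ge (e + 1) m with h1 | h1
  · exact Or.inl ⟨Nat.mod_eq_of_lt h1, h1⟩
  · have : e + 1 = m := by omega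
    exact Or.inr ⟨by rw [this, Nat.mod_self], this⟩

lemma c2_le_iff (E F : Crown (2 * n)) :
    E ≤ F ↔ E.val = F.val ∨ (Even E.val ∧
      (F.val = (E.val + 1) % (4 * (2 * n)) ∨ E.val = (F.val + 1) % (4 * (2 * n)))) := by
  rw [crown_le_iff]
  constructor
  · rintro (rfl | ⟨he, (rfl | rfl)⟩)
    · exact Or.inl rfl
    · exact Or.inr ⟨he, Or.inl (crown_add_one_val E)⟩
    · refine Or.inr ⟨he, Or.inr ?_⟩
      rw [← crown_add_one_val (E - 1), show E - 1 + 1 = E by ring]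
  · rintro (h | ⟨he, (h | h)⟩)
    · exact Or.inl (ZMod.val_injective _ h)
    · refine Or.inr ⟨he, Or.inl ?_⟩
      exact ZMod.val_injective _ (by rw [h, crown_add_one_val])
    · refine Or.inr ⟨he, Or.inr ?_⟩
      have : E = F + 1 := ZMod.val_injective _ (by rw [h, crown_add_one_val])
      rw [this]; ring

lemma gmap_le_iff (E F : Crown (2 * n)) : gmap E ≤ gmap F ↔ E ≤ F := by
  have hE := ZMod.val_lt E
  have hF := ZMod.val_lt F
  have hn := NeZero.ne n
  have hn4 : 0 < 4 * n := by omega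
  rw [sd_le_iff, c2_le_iff]
  by_cases heE : Even E.val <;> by_cases heF : Even F.val
  · rw [gmap_val_even heE, gmap_val_even heF, Set.singleton_subset_singleton,
      crown_eq_iff, ghalf_val, ghalf_val]
    rcases mod_succ_cases hE with ⟨h1, h2⟩ | ⟨h1, h2⟩ <;>
      rcases mod_succ_cases hF with ⟨h3, h4⟩ | ⟨h3, h4⟩ <;>
      simp only [Nat.even_iff, Nat.not_even_iff] at heE heF ⊢ <;> constructor <;> intro h <;> omega
  · rw [gmap_val_even heE, gmap_val_odd heF, Set.singleton_subset_iff,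
      Set.mem_insert_iff, Set.mem_singleton_iff, crown_eq_iff, crown_eq_iff,
      crown_add_one_val, ghalf_val, ghalf_val]
    have h5 : F.val / 2 < 4 * n := by omega
    rcases mod_succ_cases h5 with ⟨h6, h7⟩ | ⟨h6, h7⟩ <;>
      rcases mod_succ_cases hE with ⟨h1, h2⟩ | ⟨h1, h2⟩ <;>
      rcases mod_succ_cases hF with ⟨h3, h4⟩ | ⟨h3, h4⟩ <;>
      simp only [Nat.even_iff, Nat.not_even_iff] at heE heF ⊢ <;> constructor <;> intro h <;> omega
  · rw [gmap_val_odd heE, gmap_val_even heF, Set.insert_subset_iff,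
      Set.singleton_subset_iff, Set.mem_singleton_iff, Set.mem_singleton_iff,
      crown_eq_iff, crown_eq_iff, crown_add_one_val, ghalf_val, ghalf_val]
    have h5 : E.val / 2 < 4 * n := by omega
    rcases mod_succ_cases h5 with ⟨h6, h7⟩ | ⟨h6, h7⟩ <;>
      rcases mod_succ_cases hE with ⟨h1, h2⟩ | ⟨h1, h2⟩ <;>
      rcases mod_succ_cases hF with ⟨h3, h4⟩ | ⟨h3, h4⟩ <;>
      simp only [Nat.even_iff, Nat.not_even_iff] at heE heF ⊢ <;> constructor <;> intro h <;> omega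
  · rw [gmap_val_odd heE, gmap_val_odd heF, Set.insert_subset_iff,
      Set.singleton_subset_iff, Set.mem_insert_iff, Set.mem_insert_iff,
      Set.mem_singleton_iff, Set.mem_singleton_iff,
      crown_eq_iff, crown_eq_iff, crown_eq_iff, crown_eq_iff,
      crown_add_one_val, crown_add_one_val, ghalf_val, ghalf_val]
    have h5 : E.val / 2 < 4 * n := by omega
    have h8 : F.val / 2 < 4 * n := by omega
    rcases mod_succ_cases h5 with ⟨h6, h7⟩ | ⟨h6, h7⟩ <;>
      rcases mod_succ_cases h8 with ⟨h9, h10⟩ | ⟨h9, h10⟩ <;>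
      rcases mod_succ_cases hE with ⟨h1, h2⟩ | ⟨h1, h2⟩ <;>
      rcases mod_succ_cases hF with ⟨h3, h4⟩ | ⟨h3, h4⟩ <;>
      simp only [Nat.even_iff, Nat.not_even_iff] at heE heF ⊢ <;> constructor <;> intro h <;> omega

lemma gmap_injective : Function.Injective (gmap (n := n)) := by
  intro E F h
  exact le_antisymm ((gmap_le_iff E F).1 (le_of_eq h))
    ((gmap_le_iff F E).1 (le_of_eq h.symm))

lemma gmap_surjective : Function.Surjective (gmap (n := n)) := by
  intro C
  have hn := NeZero.ne n
  rcases sd_classify C with ⟨x, hx⟩ | ⟨a, ha⟩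
  · refine ⟨((2 * x.val : ℕ) : Crown (2 * n)), ?_⟩
    have hxv := ZMod.val_lt x
    have hval : (((2 * x.val : ℕ) : Crown (2 * n))).val = 2 * x.val := by
      rw [ZMod.val_natCast]; exact Nat.mod_eq_of_lt (by omega)
    have heven : Even (((2 * x.val : ℕ) : Crown (2 * n))).val := by
      rw [hval]; exact ⟨x.val, by ring⟩
    apply Subtype.ext
    rw [gmap_val_even heven, hx]
    congr 1
    rw [ghalf, hval, Nat.mul_div_cancel_left _ (by norm_num), ZMod.natCast_zmod_val]
  · refine ⟨((2 * a.val + 1 : ℕ) : Crown (2 * n)), ?_⟩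
    have hav := ZMod.val_lt a
    have hval : (((2 * a.val + 1 : ℕ) : Crown (2 * n))).val = 2 * a.val + 1 := by
      rw [ZMod.val_natCast]; exact Nat.mod_eq_of_lt (by omega)
    have hodd : ¬ Even (((2 * a.val + 1 : ℕ) : Crown (2 * n))).val := by
      rw [hval, Nat.even_iff]; omega
    apply Subtype.ext
    rw [gmap_val_odd hodd, ha]
    have : ghalf ((2 * a.val + 1 : ℕ) : Crown (2 * n)) = a := by
      rw [ghalf, hval, show (2 * a.val + 1) / 2 = a.val by omega, ZMod.natCast_zmod_val]
    rw [this]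

lemma two_n_cast_add_self : ((2 * n : ℕ) : Crown n) + ((2 * n : ℕ) : Crown n) = 0 := by
  rw [← Nat.cast_add, show 2 * n + 2 * n = 4 * n by ring, ZMod.natCast_self]

lemma ghalf_add (E : Crown (2 * n)) :
    ghalf (E + ((2 * (2 * n) : ℕ) : Crown (2 * n))) = ghalf E + ((2 * n : ℕ) : Crown n) := by
  have hE := ZMod.val_lt E
  have hn := NeZero.ne n
  have hcv : (((2 * (2 * n) : ℕ) : Crown (2 * n))).val = 4 * n := by
    rw [ZMod.val_natCast]
    rw [show 2 * (2 * n) = 4 * n by ring]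
    exact Nat.mod_eq_of_lt (by omega)
  have hav : (E + ((2 * (2 * n) : ℕ) : Crown (2 * n))).val = (E.val + 4 * n) % (4 * (2 * n)) := by
    rw [ZMod.val_add, hcv]
  rcases Nat.lt_or_ge (E.val + 4 * n) (4 * (2 * n)) with h | h
  · rw [ghalf, hav, Nat.mod_eq_of_lt h, show (E.val + 4 * n) / 2 = E.val / 2 + 2 * n by omega,
      Nat.cast_add, ghalf]
  · have hmod : (E.val + 4 * n) % (4 * (2 * n)) = E.val - 4 * n := by
      rw [Nat.mod_eq_sub_mod (by omega), show E.val + 4 * n - 4 * (2 * n) = E.val - 4 * n by omega]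
      exact Nat.mod_eq_of_lt (by omega)
    rw [ghalf, hav, hmod, show (E.val - 4 * n) / 2 = E.val / 2 - 2 * n by omega]
    have h2 : 2 * n ≤ E.val / 2 := by omega
    rw [Nat.cast_sub h2, sub_eq_add_neg,
      ← eq_neg_of_add_eq_zero_left two_n_cast_add_self]
    rfl

lemma val_add_4n_parity (E : Crown (2 * n)) :
    (E + ((2 * (2 * n) : ℕ) : Crown (2 * n))).val % 2 = E.val % 2 := by
  have hE := ZMod.val_lt E
  have hn := NeZero.ne n
  have hcv : (((2 * (2 * n) : ℕ) : Crown (2 * n))).val = 4 * n := by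
    rw [ZMod.val_natCast, show 2 * (2 * n) = 4 * n by ring]
    exact Nat.mod_eq_of_lt (by omega)
  rw [ZMod.val_add, hcv, Nat.mod_mod_of_dvd _ ⟨2 * (2 * n), by ring⟩]
  omega

lemma gmap_add (E : Crown (2 * n)) :
    gmap (E + ((2 * (2 * n) : ℕ) : Crown (2 * n))) = iotamap (gmap E) := by
  apply Subtype.ext
  have hpar := val_add_4n_parity E
  by_cases he : Even E.val
  · have he2 : Even (E + ((2 * (2 * n) : ℕ) : Crown (2 * n))).val := by
      rw [Nat.even_iff] at *; omega
    rw [gmap_val_even he2, ghalf_add]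
    show _ = (fun x : Crown n => x + ((2 * n : ℕ) : Crown n)) '' (gmap E).val
    rw [gmap_val_even he, Set.image_singleton]
  · have he2 : ¬ Even (E + ((2 * (2 * n) : ℕ) : Crown (2 * n))).val := by
      rw [Nat.even_iff] at *; omega
    rw [gmap_val_odd he2, ghalf_add]
    show _ = (fun x : Crown n => x + ((2 * n : ℕ) : Crown n)) '' (gmap E).val
    rw [gmap_val_odd he, Set.image_insert_eq, Set.image_singleton]
    congr 2
    ring

/-- The order isomorphism. -/
noncomputable def giso : Crown (2 * n) ≃o Sd (Crown n) where
  toEquiv := Equiv.ofBijective gmap ⟨gmap_injective, gmap_surjective⟩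
  map_rel_iff' := gmap_le_iff _ _

lemma giso_apply (E : Crown (2 * n)) : giso E = gmap E := rfl

lemma c_val : (((2 * n : ℕ) : Crown n)).val = 2 * n := by
  have := NeZero.ne n
  rw [ZMod.val_natCast]
  exact Nat.mod_eq_of_lt (by omega)

lemma c_ne_zero : ((2 * n : ℕ) : Crown n) ≠ 0 := by
  intro h
  have := congrArg ZMod.val h
  rw [c_val, ZMod.val_zero] at this
  exact absurd this (by have := NeZero.ne n; omega)

lemma c_ne_one : ((2 * n : ℕ) : Crown n) ≠ 1 := by
  intro h
  have h2 := congrArg ZMod.val h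
  haveI : Fact (1 < 4 * n) := ⟨by have := NeZero.ne n; omega⟩
  rw [c_val, ZMod.val_one] at h2
  exact absurd h2 (by have := NeZero.ne n; omega)

end AuxCrown

/-- For `n ≥ 1`, the barycentric subdivision of the `Z₂`-crown of order
`n`, with the involution `C ↦ ν(C)`, is a `Z₂`-poset order-isomorphic to the `Z₂`-crown of
order `2n` via an isomorphism commuting with the involutions. -/
theorem subdivision_crown_iso_crown (n : ℕ) [NeZero n] :
    ∃ ι : Sd (Crown n) → Sd (Crown n),
      (∀ C : Sd (Crown n),
        (ι C).val = (fun x : Crown n => x + ((2 * n : ℕ) : Crown n)) '' C.val) ∧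
      Monotone ι ∧ (∀ C, ι (ι C) = C) ∧ (∀ C, ι C ≠ C) ∧
      ∃ e : Sd (Crown n) ≃o Crown (2 * n),
        ∀ C : Sd (Crown n), e (ι C) = e C + ((2 * (2 * n) : ℕ) : Crown (2 * n)) := by
  refine ⟨iotamap, fun C => rfl, ?_, ?_, ?_, ?_⟩
  · -- monotone
    intro C D h
    exact (sd_le_iff _ _).2 (Set.image_mono ((sd_le_iff _ _).1 h))
  · -- involution
    intro C
    apply Subtype.ext
    show (fun x : Crown n => x + _) '' ((fun x : Crown n => x + _) '' C.val) = C.val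
    rw [Set.image_image]
    have h0 : ∀ x : Crown n, x + ((2 * n : ℕ) : Crown n) + ((2 * n : ℕ) : Crown n) = x := by
      intro x; rw [add_assoc, two_n_cast_add_self, add_zero]
    simp only [h0, Set.image_id']
  · -- no fixed points
    intro C hC
    rcases sd_classify C with ⟨y, hy⟩ | ⟨a, ha⟩
    · have hy' : y ∈ C.val := by rw [hy]; exact rfl
      have hmem : y + ((2 * n : ℕ) : Crown n) ∈ (iotamap C).val := ⟨y, hy', rfl⟩
      rw [hC, hy, Set.mem_singleton_iff] at hmem
      exact c_ne_zero (by rwa [add_eq_left] at hmem)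
    · have ha' : a ∈ C.val := by rw [ha]; exact Set.mem_insert _ _
      have hmem : a + ((2 * n : ℕ) : Crown n) ∈ (iotamap C).val := ⟨a, ha', rfl⟩
      rw [hC, ha, Set.mem_insert_iff, Set.mem_singleton_iff] at hmem
      rcases hmem with h | h
      · exact c_ne_zero (by rwa [add_eq_left] at h)
      · exact c_ne_one (add_left_cancel h)
  · -- the order isomorphism
    refine ⟨giso.symm, fun C => ?_⟩
    have h2 : ∀ X : Crown (2 * n), giso.symm (gmap X) = X := by
      intro X; rw [← giso_apply]; exact giso.symm_apply_apply X
    have h1 : gmap (giso.symm C) = C := by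
      rw [← giso_apply]; exact giso.apply_symm_apply C
    conv_lhs => rw [← h1, ← gmap_add]
    rw [h2]
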